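/- Let N = 2K with integer K ≥ 4 and H ≫ K^K. Define tasks τ₁ = (C₁=1/K, T₁=H, D₁=1); for even i = 2,4,…,2K, τᵢ = (Cᵢ = K^{i/2−2}, Tᵢ = Dᵢ = K^{i/2−1}); and for odd i = 3,5,…,2K−1, τᵢ = (Cᵢ = K^{(i−1)/2} − K^{(i−1)/2−1}, Tᵢ = H, Dᵢ = K^{(i−1)/2}). Then the subset of odd-indexed tasks satisfies Σ dbf(τᵢ, t) ≤ t for all t ≥ 0, and the subset of even-indexed tasks satisfies Σ Cᵢ/Tᵢ ≤ 1 (hence is EDF-feasible on one processor). -/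

import Mathlib

/-- Demand bound function of a sporadic task (C, T, D) at time t. -/
noncomputable def dbf (C T D t : ℝ) : ℝ := ((max 0 (⌊(t - D) / T⌋ + 1) : ℤ) : ℝ) * C

/-- Execution time of task i in the task set of Theorem 2. -/
noncomputable def Cbf (K : ℕ) (i : ℕ) : ℝ :=
  if i = 1 then 1 / K
  else if i % 2 = 0 then (K : ℝ) ^ ((i : ℤ) / 2 - 2)
  else (K : ℝ) ^ (((i : ℤ) - 1) / 2) - (K : ℝ) ^ (((i : ℤ) - 1) / 2 - 1)

/-- Relative deadline of task i in the task set of Theorem 2. -/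
noncomputable def Dbf (K : ℕ) (i : ℕ) : ℝ :=
  if i = 1 then 1
  else if i % 2 = 0 then (K : ℝ) ^ ((i : ℤ) / 2 - 1)
  else (K : ℝ) ^ (((i : ℤ) - 1) / 2)

/-- Period of task i in the task set of Theorem 2 (H for odd i, = deadline for even i). -/
noncomputable def Tbf (K : ℕ) (H : ℝ) (i : ℕ) : ℝ :=
  if i % 2 = 0 then Dbf K i else H

/-- Key upper bound on the demand bound function. -/
lemma dbf_bound (C T D t : ℝ) (hC : 0 ≤ C) (hT : 0 < T) (hD : 0 < D) (hDT : D ≤ T)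
    (ht : 0 ≤ t) :
    dbf C T D t ≤ ((⌊t / T⌋ : ℝ) + (if D ≤ t then 1 else 0)) * C := by
  unfold dbf
  apply mul_le_mul_of_nonneg_right _ hC
  have hq0 : (0 : ℤ) ≤ ⌊t / T⌋ := Int.floor_nonneg.2 (by positivity)
  by_cases h : D ≤ t
  · rw [if_pos h]
    have h1 : (⌊(t - D) / T⌋ : ℤ) ≤ ⌊t / T⌋ :=
      Int.floor_le_floor (by gcongr; linarith)
    have h2 : max 0 (⌊(t - D) / T⌋ + 1) ≤ ⌊t / T⌋ + 1 :=
      max_le (by omega) (by omega)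
    exact_mod_cast h2
  · rw [if_neg h]
    push_neg at h
    have hfl : ⌊(t - D) / T⌋ = -1 := by
      rw [Int.floor_eq_iff]
      constructor
      · rw [le_div_iff₀ hT]; push_cast; linarith
      · push_cast
        have : (t - D) / T < 0 := div_neg_of_neg_of_pos (by linarith) hT
        linarith
    rw [hfl]
    norm_num
    exact_mod_cast hq0

theorem best_fit_instance_two_processors (K : ℕ) (hK : 4 ≤ K) (H : ℝ)
    (hH : (K : ℝ) ^ K < H) :
    (∀ t : ℝ, 0 ≤ t →
      ∑ i ∈ (Finset.Icc 1 (2 * K)).filter (fun i => i % 2 = 1),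
        dbf (Cbf K i) (Tbf K H i) (Dbf K i) t ≤ t) ∧
    ∑ i ∈ (Finset.Icc 1 (2 * K)).filter (fun i => i % 2 = 0),
        Cbf K i / Tbf K H i ≤ 1 := by
  have hK0 : 0 < K := by omega
  have hK1R : (1 : ℝ) ≤ K := by exact_mod_cast Nat.one_le_iff_ne_zero.2 (by omega)
  have hK4R : (4 : ℝ) ≤ K := by exact_mod_cast hK
  have hKne : (K : ℝ) ≠ 0 := by positivity
  have hH0 : 0 < H := lt_trans (by positivity) hH
  constructor
  · -- odd tasks
    intro t ht
    have hset : (Finset.Icc 1 (2 * K)).filter (fun i => i % 2 = 1)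
        = (Finset.range K).image (fun j => 2 * j + 1) := by
      ext i
      simp only [Finset.mem_filter, Finset.mem_Icc, Finset.mem_image, Finset.mem_range]
      constructor
      · rintro ⟨⟨h1, h2⟩, h3⟩; exact ⟨i / 2, by omega, by omega⟩
      · rintro ⟨j, hj, rfl⟩; omega
    rw [hset, Finset.sum_image (fun a _ b _ h => by omega)]
    -- concrete parameters
    set cf : ℕ → ℝ := fun j => if j = 0 then 1 / (K : ℝ) else (K : ℝ) ^ j - (K : ℝ) ^ (j - 1)
      with hcf
    set df : ℕ → ℝ := fun j => (K : ℝ) ^ j with hdf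
    have hterm : ∀ j ∈ Finset.range K,
        dbf (Cbf K (2 * j + 1)) (Tbf K H (2 * j + 1)) (Dbf K (2 * j + 1)) t
          = dbf (cf j) H (df j) t := by
      intro j _
      have hmod : (2 * j + 1) % 2 = 1 := by omega
      rcases Nat.eq_zero_or_pos j with rfl | hj
      · simp [Cbf, Dbf, Tbf, hcf, hdf]
      · have h1 : 2 * j + 1 ≠ 1 := by omega
        have he : (((2 * j + 1 : ℕ) : ℤ) - 1) / 2 = (j : ℤ) := by push_cast; omega
        have he2 : (j : ℤ) - 1 = ((j - 1 : ℕ) : ℤ) := by omega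
        simp only [Cbf, Dbf, Tbf, if_neg h1, hmod, he]
        norm_num
        simp only [he2, zpow_natCast]
        simp [hcf, hdf, if_neg (show j ≠ 0 by omega)]
    rw [Finset.sum_congr rfl hterm]
    -- basic facts
    have hcf_nonneg : ∀ j, 0 ≤ cf j := by
      intro j
      rcases Nat.eq_zero_or_pos j with rfl | hj
      · simp only [hcf, if_pos rfl]; positivity
      · simp only [hcf, if_neg (by omega : j ≠ 0)]
        have : (K : ℝ) ^ (j - 1) ≤ (K : ℝ) ^ j := pow_le_pow_right₀ hK1R (by omega)
        linarith
    have hdf_pos : ∀ j, 0 < df j := fun j => by positivity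
    have hdf_le : ∀ j ∈ Finset.range K, df j ≤ H := by
      intro j hj
      simp only [Finset.mem_range] at hj
      have : (K : ℝ) ^ j ≤ (K : ℝ) ^ K := pow_le_pow_right₀ hK1R (by omega)
      simp only [hdf]; linarith
    -- per-term bound
    set q : ℤ := ⌊t / H⌋ with hq
    have hq0 : 0 ≤ q := Int.floor_nonneg.2 (by positivity)
    have hqH : (q : ℝ) * H ≤ t := by
      have := Int.floor_le (t / H)
      calc (q : ℝ) * H ≤ (t / H) * H := by
            apply mul_le_mul_of_nonneg_right this (le_of_lt hH0)
        _ = t := div_mul_cancel₀ t (ne_of_gt hH0)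
    have hbound : ∀ j ∈ Finset.range K,
        dbf (cf j) H (df j) t ≤ (q : ℝ) * cf j + (if df j ≤ t then 1 else 0) * cf j := by
      intro j hj
      have := dbf_bound (cf j) H (df j) t (hcf_nonneg j) hH0 (hdf_pos j) (hdf_le j hj) ht
      calc dbf (cf j) H (df j) t ≤ ((q : ℝ) + (if df j ≤ t then 1 else 0)) * cf j := this
        _ = (q : ℝ) * cf j + (if df j ≤ t then 1 else 0) * cf j := by ring
    have hsum1 : ∑ j ∈ Finset.range K, dbf (cf j) H (df j) t
        ≤ (q : ℝ) * (∑ j ∈ Finset.range K, cf j)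
          + ∑ j ∈ Finset.range K, (if df j ≤ t then 1 else 0) * cf j := by
      rw [Finset.mul_sum, ← Finset.sum_add_distrib]
      exact Finset.sum_le_sum hbound
    -- telescoping bounds
    set M : ℕ → ℝ := fun j => if j = 0 then 0 else min t ((K : ℝ) ^ (j - 1)) with hM
    set N : ℕ → ℝ := fun j => if j = 0 then 0 else (K : ℝ) ^ (j - 1) with hN
    have hMtel : ∑ j ∈ Finset.range K, (M (j + 1) - M j) = M K - M 0 :=
      Finset.sum_range_sub M K
    have hNtel : ∑ j ∈ Finset.range K, (N (j + 1) - N j) = N K - N 0 :=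
      Finset.sum_range_sub N K
    have hS : ∑ j ∈ Finset.range K, cf j ≤ (K : ℝ) ^ (K - 1) := by
      have : ∑ j ∈ Finset.range K, cf j ≤ ∑ j ∈ Finset.range K, (N (j + 1) - N j) := by
        apply Finset.sum_le_sum
        intro j _
        rcases Nat.eq_zero_or_pos j with rfl | hj
        · have hN1 : N 1 - N 0 = 1 := by simp [hN]
          have hc0 : cf 0 = 1 / (K : ℝ) := by simp [hcf]
          rw [show (0 : ℕ) + 1 = 1 from rfl, hN1, hc0, div_le_one (by positivity)]
          linarith
        · simp only [hcf, hN, if_neg (by omega : j ≠ 0), if_neg (by omega : j + 1 ≠ 0)]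
          have : j + 1 - 1 = j := by omega
          rw [this]
      rw [hNtel] at this
      simp only [hN, if_pos rfl, if_neg (by omega : K ≠ 0)] at this
      linarith
    have hA : ∑ j ∈ Finset.range K, (if df j ≤ t then 1 else 0) * cf j
        ≤ min t ((K : ℝ) ^ (K - 1)) := by
      have : ∑ j ∈ Finset.range K, (if df j ≤ t then 1 else 0) * cf j
          ≤ ∑ j ∈ Finset.range K, (M (j + 1) - M j) := by
        apply Finset.sum_le_sum
        intro j _
        rcases Nat.eq_zero_or_pos j with rfl | hj
        · have hM1 : M 1 - M 0 = min t 1 := by simp [hM]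
          have hc0 : cf 0 = 1 / (K : ℝ) := by simp [hcf]
          have hd0 : df 0 = 1 := by simp [hdf]
          rw [show (0 : ℕ) + 1 = 1 from rfl, hM1, hc0, hd0]
          by_cases h1t : (1 : ℝ) ≤ t
          · rw [if_pos h1t, min_eq_right h1t, one_mul, div_le_one (by positivity)]
            linarith
          · rw [if_neg h1t, zero_mul]
            exact le_min ht (by norm_num)
        · simp only [hcf, hdf, hM, if_neg (by omega : j ≠ 0), if_neg (by omega : j + 1 ≠ 0)]
          have hjj : j + 1 - 1 = j := by omega
          rw [hjj]
          have hmono : (K : ℝ) ^ (j - 1) ≤ (K : ℝ) ^ j := pow_le_pow_right₀ hK1R (by omega)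
          by_cases hjt : (K : ℝ) ^ j ≤ t
          · rw [if_pos hjt, one_mul, min_eq_right hjt,
              min_eq_right (le_trans hmono hjt)]
          · rw [if_neg hjt, zero_mul]
            have : min t ((K : ℝ) ^ (j - 1)) ≤ min t ((K : ℝ) ^ j) :=
              min_le_min le_rfl hmono
            linarith
      rw [hMtel] at this
      simp only [hM, if_pos rfl, if_neg (by omega : K ≠ 0)] at this
      linarith
    -- finish
    have hKK : 4 * (K : ℝ) ^ (K - 1) ≤ (K : ℝ) ^ K := by
      have : (K : ℝ) ^ K = (K : ℝ) ^ (K - 1) * K := by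
        rw [← pow_succ]; congr 1; omega
      rw [this]
      have : (0 : ℝ) ≤ (K : ℝ) ^ (K - 1) := by positivity
      nlinarith
    have hpow_nonneg : (0 : ℝ) ≤ (K : ℝ) ^ (K - 1) := by positivity
    rcases eq_or_lt_of_le hq0 with hq1 | hq1
    · -- q = 0
      have hq' : (q : ℝ) = 0 := by exact_mod_cast hq1.symm
      have := min_le_left t ((K : ℝ) ^ (K - 1))
      calc ∑ j ∈ Finset.range K, dbf (cf j) H (df j) t
          ≤ (q : ℝ) * (∑ j ∈ Finset.range K, cf j)
            + ∑ j ∈ Finset.range K, (if df j ≤ t then 1 else 0) * cf j := hsum1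
        _ ≤ 0 + min t ((K : ℝ) ^ (K - 1)) := by rw [hq', zero_mul]; linarith
        _ ≤ t := by linarith
    · -- q ≥ 1
      have hq1R : (1 : ℝ) ≤ (q : ℝ) := by exact_mod_cast hq1
      have hmin := min_le_right t ((K : ℝ) ^ (K - 1))
      have hSnn : 0 ≤ ∑ j ∈ Finset.range K, cf j :=
        Finset.sum_nonneg fun j _ => hcf_nonneg j
      calc ∑ j ∈ Finset.range K, dbf (cf j) H (df j) t
          ≤ (q : ℝ) * (∑ j ∈ Finset.range K, cf j)
            + ∑ j ∈ Finset.range K, (if df j ≤ t then 1 else 0) * cf j := hsum1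
        _ ≤ (q : ℝ) * (K : ℝ) ^ (K - 1) + (K : ℝ) ^ (K - 1) := by
            have := mul_le_mul_of_nonneg_left hS (le_trans zero_le_one hq1R)
            linarith
        _ ≤ t := by nlinarith [mul_le_mul_of_nonneg_left (le_of_lt hH) (le_trans zero_le_one hq1R)]
  · -- even tasks
    have hset : (Finset.Icc 1 (2 * K)).filter (fun i => i % 2 = 0)
        = (Finset.Icc 1 K).image (fun j => 2 * j) := by
      ext i
      simp only [Finset.mem_filter, Finset.mem_Icc, Finset.mem_image]
      constructor
      · rintro ⟨⟨h1, h2⟩, h3⟩; exact ⟨i / 2, by omega, by omega⟩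
      · rintro ⟨j, hj, rfl⟩; omega
    rw [hset, Finset.sum_image (fun a _ b _ h => by omega)]
    have hterm : ∀ j ∈ Finset.Icc 1 K, Cbf K (2 * j) / Tbf K H (2 * j) = (K : ℝ)⁻¹ := by
      intro j hj
      rw [Finset.mem_Icc] at hj
      have h1 : 2 * j ≠ 1 := by omega
      have hmod : (2 * j) % 2 = 0 := by omega
      have he : ((2 * j : ℕ) : ℤ) / 2 = (j : ℤ) := by push_cast; omega
      simp only [Cbf, Tbf, Dbf, if_neg h1, hmod, he, eq_self_iff_true, if_true]
      rw [← zpow_sub₀ hKne, show (j : ℤ) - 2 - ((j : ℤ) - 1) = -1 by ring, zpow_neg_one]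
    rw [Finset.sum_congr rfl hterm, Finset.sum_const, Nat.card_Icc]
    simp only [Nat.add_sub_cancel, nsmul_eq_mul]
    rw [mul_inv_cancel₀ hKne]
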